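/- Let W : [0,1] → ℝ≥0 be a continuous excursion satisfying the modulus of continuity bound osc(W,[0,1],δ) ≤ c√(δ ln(1/δ)) for all δ ∈ (0,η), for some constants c > 0, η ∈ (0,1). Then there exist constants c', r₁ > 0 such that for all r ∈ (0,r₁) and all s ∈ [0,1]: |W_s - W_t| > r/3 implies |s - t| ≥ c' r² / ln(1/r). Consequently, inf_{σ∈T} μ(B(σ,r)) ≥ c'' r² (ln(1/r))^{-1} for all sufficiently small r, where T is the tree coded by W. -/

import Mathlib

open MeasureTheory Set

lemma aux_delta (c η : ℝ) (hc : 0 < c) (hη0 : 0 < η) (hη1 : η < 1) :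
    ∃ K, 0 < K ∧ ∃ r₁, 0 < r₁ ∧ ∀ r, 0 < r → r < r₁ →
      0 < K * r ^ 2 / Real.log (1 / r) ∧ K * r ^ 2 / Real.log (1 / r) < η ∧
      c * Real.sqrt (K * r ^ 2 / Real.log (1 / r) *
        Real.log (1 / (K * r ^ 2 / Real.log (1 / r)))) ≤ r / 6 := by
  set K := min (1 / (144 * c ^ 2)) 1 with hKdef
  have hK0 : 0 < K := lt_min (by positivity) one_pos
  have hK1 : K ≤ 1 := min_le_right _ _
  have hKc : K ≤ 1 / (144 * c ^ 2) := min_le_left _ _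
  refine ⟨K, hK0, min K (min (Real.exp (-1)) η), by positivity, ?_⟩
  intro r hr0 hr1
  have hrK : r < K := lt_of_lt_of_le hr1 (min_le_left _ _)
  have hre : r < Real.exp (-1) := lt_of_lt_of_le hr1 (le_trans (min_le_right _ _) (min_le_left _ _))
  have hrη : r < η := lt_of_lt_of_le hr1 (le_trans (min_le_right _ _) (min_le_right _ _))
  have hrlt1 : r < 1 := lt_trans hrη hη1
  set L := Real.log (1 / r) with hLdef
  have hL1 : 1 ≤ L := by
    rw [hLdef, Real.le_log_iff_exp_le (by positivity)]
    rw [le_div_iff₀ hr0]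
    calc Real.exp 1 * r ≤ Real.exp 1 * Real.exp (-1) :=
          mul_le_mul_of_nonneg_left hre.le (Real.exp_pos 1).le
      _ = 1 := by rw [← Real.exp_add]; norm_num
  have hL0 : 0 < L := lt_of_lt_of_le one_pos hL1
  set δ := K * r ^ 2 / L with hδdef
  have hδ0 : 0 < δ := by positivity
  have hδKr : δ ≤ K * r ^ 2 := by
    rw [hδdef, div_le_iff₀ hL0]
    nlinarith [mul_le_mul_of_nonneg_left hL1 (show (0:ℝ) ≤ K * r ^ 2 by positivity)]
  have hδη : δ < η := by nlinarith [sq_nonneg r]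
  have hδ1 : δ < 1 := lt_trans hδη hη1
  -- log (1/δ) ≤ 4 L
  have hLr : L ≤ 1 / r := le_trans (Real.log_le_sub_one_of_pos (by positivity)) (by linarith)
  have hinv : 1 / δ ≤ (1 / r) ^ 4 := by
    rw [hδdef, one_div_div, div_le_iff₀ (by positivity : (0:ℝ) < K * r ^ 2)]
    have h1 : (1 / r) ^ 4 * (K * r ^ 2) = K / r ^ 2 := by
      field_simp
    rw [h1, le_div_iff₀ (by positivity : (0:ℝ) < r ^ 2)]
    have h2 : L * r ^ 2 ≤ (1 / r) * r ^ 2 := mul_le_mul_of_nonneg_right hLr (by positivity)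
    have h3 : (1 / r) * r ^ 2 = r := by field_simp
    nlinarith
  have hlogδ : Real.log (1 / δ) ≤ 4 * L := by
    calc Real.log (1 / δ) ≤ Real.log ((1 / r) ^ 4) :=
          Real.log_le_log (by positivity) hinv
      _ = 4 * L := by rw [Real.log_pow, hLdef]; push_cast; ring
  have hδL : δ * L = K * r ^ 2 := by
    rw [hδdef]; field_simp
  have hprod : δ * Real.log (1 / δ) ≤ r ^ 2 / (36 * c ^ 2) := by
    have h4 : δ * Real.log (1 / δ) ≤ δ * (4 * L) :=
      mul_le_mul_of_nonneg_left hlogδ hδ0.le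
    have h5 : δ * (4 * L) = 4 * (K * r ^ 2) := by rw [← hδL]; ring
    have h6 : 4 * (K * r ^ 2) ≤ 4 * ((1 / (144 * c ^ 2)) * r ^ 2) := by
      nlinarith [sq_nonneg r]
    have h7 : 4 * ((1 / (144 * c ^ 2)) * r ^ 2) = r ^ 2 / (36 * c ^ 2) := by
      field_simp; ring
    linarith
  refine ⟨hδ0, hδη, ?_⟩
  have hsq : Real.sqrt (δ * Real.log (1 / δ)) ≤ r / (6 * c) := by
    calc Real.sqrt (δ * Real.log (1 / δ)) ≤ Real.sqrt (r ^ 2 / (36 * c ^ 2)) :=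
          Real.sqrt_le_sqrt hprod
      _ = r / (6 * c) := by
          rw [show r ^ 2 / (36 * c ^ 2) = (r / (6 * c)) ^ 2 by ring,
            Real.sqrt_sq (by positivity)]
  calc c * Real.sqrt (δ * Real.log (1 / δ)) ≤ c * (r / (6 * c)) :=
        mul_le_mul_of_nonneg_left hsq hc.le
    _ = r / 6 := by field_simp

/-- If the excursion `W` coding the tree `T` satisfies the modulus of continuity bound
`osc(W,[0,1],δ) ≤ c√(δ ln(1/δ))` for `δ ∈ (0,η)`, then there are `c', r₁ > 0` such that for
`r ∈ (0,r₁)` and `s,t ∈ [0,1]`, `|W_s - W_t| > r/3` implies `|s-t| ≥ c' r²/ln(1/r)`;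
consequently `inf_σ μ(B(σ,r)) ≥ c'' r² (ln(1/r))⁻¹` for all sufficiently small `r`. -/
theorem stmt_17 (W : ℝ → ℝ) (hW : Continuous W) (hnn : ∀ t, 0 ≤ W t)
    (hexc : ∀ t, 0 < W t ↔ t ∈ Ioo (0:ℝ) 1)
    (c η : ℝ) (hc : 0 < c) (hη : η ∈ Ioo (0:ℝ) 1)
    (hosc : ∀ δ ∈ Ioo (0:ℝ) η, ∀ u ∈ Icc (0:ℝ) 1, ∀ v ∈ Icc (0:ℝ) 1,
      |u - v| ≤ δ → |W u - W v| ≤ c * Real.sqrt (δ * Real.log (1 / δ))) :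
    (∃ c' > (0:ℝ), ∃ r₁ > (0:ℝ), ∀ r ∈ Ioo (0:ℝ) r₁, ∀ s ∈ Icc (0:ℝ) 1, ∀ t ∈ Icc (0:ℝ) 1,
      r / 3 < |W s - W t| → c' * r ^ 2 / Real.log (1 / r) ≤ |s - t|) ∧
    (∃ c'' > (0:ℝ), ∃ r₂ > (0:ℝ), ∀ r ∈ Ioo (0:ℝ) r₂, ∀ s ∈ Icc (0:ℝ) 1,
      ENNReal.ofReal (c'' * r ^ 2 / Real.log (1 / r)) ≤
        volume {t | t ∈ Icc (0:ℝ) 1 ∧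
          W s + W t - 2 * sInf (W '' Icc (min s t) (max s t)) < r}) := by
  obtain ⟨K, hK0, r₁, hr₁0, hkey⟩ := aux_delta c η hc hη.1 hη.2
  constructor
  · -- Part 1
    refine ⟨K, hK0, r₁, hr₁0, ?_⟩
    intro r hr s hs t ht hWst
    obtain ⟨hδ0, hδη, hδosc⟩ := hkey r hr.1 hr.2
    by_contra hcon
    push_neg at hcon
    have h1 : |W s - W t| ≤ c * Real.sqrt (K * r ^ 2 / Real.log (1 / r) *
        Real.log (1 / (K * r ^ 2 / Real.log (1 / r)))) :=
      hosc _ ⟨hδ0, hδη⟩ s hs t ht hcon.le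
    linarith [hr.1]
  · -- Part 2
    refine ⟨K, hK0, r₁, hr₁0, ?_⟩
    intro r hr s hs
    obtain ⟨hδ0, hδη, hδosc⟩ := hkey r hr.1 hr.2
    set δ := K * r ^ 2 / Real.log (1 / r) with hδdef
    have hδ1 : δ < 1 := lt_trans hδη hη.2
    -- the interval [max 0 (s-δ), min 1 (s+δ)] is contained in the set
    have hsub : Icc (max 0 (s - δ)) (min 1 (s + δ)) ⊆
        {t | t ∈ Icc (0:ℝ) 1 ∧
          W s + W t - 2 * sInf (W '' Icc (min s t) (max s t)) < r} := by
      intro t htmem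
      have ht0 : 0 ≤ t := le_trans (le_max_left _ _) htmem.1
      have ht1 : t ≤ 1 := le_trans htmem.2 (min_le_left _ _)
      have hts : |s - t| ≤ δ := by
        rw [abs_sub_le_iff]
        constructor
        · have := le_trans (le_max_right 0 (s - δ)) htmem.1; linarith
        · have := le_trans htmem.2 (min_le_right 1 (s + δ)); linarith
      -- minimizer of W
      have hne : (Icc (min s t) (max s t)).Nonempty := nonempty_Icc.2 min_le_max
      obtain ⟨u, humem, humin⟩ := isCompact_Icc.exists_isMinOn hne hW.continuousOn
      have hinf : sInf (W '' Icc (min s t) (max s t)) = W u := by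
        refine IsLeast.csInf_eq ⟨⟨u, humem, rfl⟩, ?_⟩
        rintro y ⟨x, hx, rfl⟩
        exact humin hx
      have hu01 : u ∈ Icc (0:ℝ) 1 := by
        constructor
        · exact le_trans (le_min hs.1 ht0) humem.1
        · exact le_trans humem.2 (max_le hs.2 ht1)
      have hsu : |s - u| ≤ δ := by
        have h1 : min s t ≤ s := min_le_left _ _
        have h2 : s ≤ max s t := le_max_left _ _
        have h3 : max s t - min s t = |s - t| := ((max_sub_min_eq_abs s t).trans (abs_sub_comm t s))
        rw [abs_sub_le_iff]
        constructor
        · have := humem.1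
          have := abs_le.1 hts
          nlinarith [abs_nonneg (s - t), humem.2]
        · have := humem.2
          have := abs_le.1 hts
          nlinarith [abs_nonneg (s - t), humem.1]
      have htu : |t - u| ≤ δ := by
        have h3 : max s t - min s t = |s - t| := ((max_sub_min_eq_abs s t).trans (abs_sub_comm t s))
        rw [abs_sub_le_iff]
        constructor
        · have h1 := humem.1
          have h4 := abs_le.1 hts
          have h2 : t ≤ max s t := le_max_right _ _
          nlinarith
        · have h1 := humem.2
          have h4 := abs_le.1 hts
          have h2 : min s t ≤ t := min_le_right _ _
          nlinarith
      have hbs : |W s - W u| ≤ c * Real.sqrt (δ * Real.log (1 / δ)) :=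
        hosc _ ⟨hδ0, hδη⟩ s hs u hu01 hsu
      have hbt : |W t - W u| ≤ c * Real.sqrt (δ * Real.log (1 / δ)) :=
        hosc _ ⟨hδ0, hδη⟩ t ⟨ht0, ht1⟩ u hu01 htu
      refine ⟨⟨ht0, ht1⟩, ?_⟩
      rw [hinf]
      have h5 := abs_le.1 hbs
      have h6 := abs_le.1 hbt
      have hr0 : 0 < r := hr.1
      linarith
    calc ENNReal.ofReal (K * r ^ 2 / Real.log (1 / r))
        ≤ volume (Icc (max 0 (s - δ)) (min 1 (s + δ))) := by
          rw [Real.volume_Icc]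
          apply ENNReal.ofReal_le_ofReal
          have hs0 := hs.1; have hs1 := hs.2
          rcases le_or_gt (s + δ) 1 with h | h
          · have h1 : min 1 (s + δ) = s + δ := min_eq_right h
            have h2 : max 0 (s - δ) ≤ s := max_le hs0 (by linarith)
            rw [h1]; linarith
          · have h1 : min 1 (s + δ) = 1 := min_eq_left h.le
            have h2 : max 0 (s - δ) ≤ 1 - δ := max_le (by linarith) (by linarith)
            rw [h1]; linarith
      _ ≤ volume _ := measure_mono hsub
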